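/- Let Y, Z, Z' be random variables taking values in finite types, defined on a common probability space with a joint probability mass function, where Z takes values in a finite type of cardinality N ≥ 2, and suppose I(Z';Y) ≤ I(Z;Y) and H(Y) > 0. Then the normalized JEMMIG score (H(Z) + H(Y) − 2 I(Z;Y) + I(Z';Y)) / (log N + H(Y)) lies in the interval [0,1]. -/
import Mathlib


open Finset

/-- The distribution (pmf) of a random variable `f` on a finite sample space with pmf `p`. -/
noncomputable def dist {Ω A : Type*} [Fintype Ω] [DecidableEq A]
    (p : Ω → ℝ) (f : Ω → A) (a : A) : ℝ :=
  ∑ ω, if f ω = a then p ω else 0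

/-- Shannon entropy of a random variable `f` (convention `0 · log 0 = 0`). -/
noncomputable def entropy {Ω A : Type*} [Fintype Ω] [Fintype A] [DecidableEq A]
    (p : Ω → ℝ) (f : Ω → A) : ℝ :=
  -∑ a, dist p f a * Real.log (dist p f a)

/-- Mutual information `I(f;g) = H(f) + H(g) − H(f,g)`. -/
noncomputable def mutualInfo {Ω A B : Type*} [Fintype Ω] [Fintype A] [Fintype B]
    [DecidableEq A] [DecidableEq B] (p : Ω → ℝ) (f : Ω → A) (g : Ω → B) : ℝ :=
  entropy p f + entropy p g - entropy p (fun ω => (f ω, g ω))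

/-- The conditional distribution of `f` given `h = c`. -/
noncomputable def condDist {Ω A C : Type*} [Fintype Ω] [DecidableEq A] [DecidableEq C]
    (p : Ω → ℝ) (f : Ω → A) (h : Ω → C) (c : C) (a : A) : ℝ :=
  (∑ ω, if f ω = a ∧ h ω = c then p ω else 0) / dist p h c

/-- The entropy of `f` conditioned on the event `h = c`. -/
noncomputable def condEntropy {Ω A C : Type*} [Fintype Ω] [Fintype A] [Fintype C]
    [DecidableEq A] [DecidableEq C] (p : Ω → ℝ) (f : Ω → A) (h : Ω → C) (c : C) : ℝ :=
  -∑ a, condDist p f h c a * Real.log (condDist p f h c a)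

/-- Conditional mutual information
`I(f;g | h) = ∑_c P(h=c) [H(f|h=c) + H(g|h=c) − H(f,g|h=c)]`. -/
noncomputable def condMutualInfo {Ω A B C : Type*} [Fintype Ω] [Fintype A] [Fintype B]
    [Fintype C] [DecidableEq A] [DecidableEq B] [DecidableEq C]
    (p : Ω → ℝ) (f : Ω → A) (g : Ω → B) (h : Ω → C) : ℝ :=
  ∑ c, dist p h c *
    (condEntropy p f h c + condEntropy p g h c
      - condEntropy p (fun ω => (f ω, g ω)) h c)

set_option linter.unusedSectionVars false

section Aux


variable {Ω A B : Type*} [Fintype Ω] [Fintype A] [Fintype B] [DecidableEq A] [DecidableEq B]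

lemma dist_nonneg' (p : Ω → ℝ) (hp : ∀ ω, 0 ≤ p ω) (f : Ω → A) (a : A) :
    0 ≤ dist p f a := by
  apply Finset.sum_nonneg; intro ω _; split <;> simp [hp ω]

lemma sum_dist (p : Ω → ℝ) (f : Ω → A) : ∑ a, dist p f a = ∑ ω, p ω := by
  unfold _root_.dist; rw [Finset.sum_comm]
  exact Finset.sum_congr rfl fun ω _ => by simp

lemma dist_fst (p : Ω → ℝ) (f : Ω → A) (g : Ω → B) (a : A) :
    ∑ b, dist p (fun ω => (f ω, g ω)) (a, b) = dist p f a := by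
  unfold _root_.dist; rw [Finset.sum_comm]
  refine Finset.sum_congr rfl fun ω _ => ?_
  by_cases h : f ω = a <;> simp [Prod.ext_iff, h]

lemma dist_snd (p : Ω → ℝ) (f : Ω → A) (g : Ω → B) (b : B) :
    ∑ a, dist p (fun ω => (f ω, g ω)) (a, b) = dist p g b := by
  unfold _root_.dist; rw [Finset.sum_comm]
  refine Finset.sum_congr rfl fun ω _ => ?_
  by_cases h : g ω = b <;> simp [Prod.ext_iff, h]

lemma sum_pair_fst (p : Ω → ℝ) (f : Ω → A) (g : Ω → B) (φ : A → ℝ) :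
    ∑ x : A × B, dist p (fun ω => (f ω, g ω)) x * φ x.1 = ∑ a, dist p f a * φ a := by
  rw [Fintype.sum_prod_type]
  refine Finset.sum_congr rfl fun a _ => ?_
  show ∑ b, dist p (fun ω => (f ω, g ω)) (a, b) * φ a = _
  rw [← Finset.sum_mul, dist_fst]

lemma sum_pair_snd (p : Ω → ℝ) (f : Ω → A) (g : Ω → B) (φ : B → ℝ) :
    ∑ x : A × B, dist p (fun ω => (f ω, g ω)) x * φ x.2 = ∑ b, dist p g b * φ b := by
  rw [Fintype.sum_prod_type_right]
  refine Finset.sum_congr rfl fun b _ => ?_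
  show ∑ a, dist p (fun ω => (f ω, g ω)) (a, b) * φ b = _
  rw [← Finset.sum_mul, dist_snd]

/-- Gibbs-style key inequality. -/
lemma key_ineq {ι : Type*} [Fintype ι] (w s : ι → ℝ)
    (hw : ∀ i, 0 ≤ w i) (hs : ∀ i, 0 ≤ s i) (hws : ∀ i, 0 < w i → 0 < s i)
    (h1 : ∑ i, w i = 1) (h2 : ∑ i, s i ≤ 1) :
    ∑ i, w i * Real.log (s i) - ∑ i, w i * Real.log (w i) ≤ 0 := by
  have hterm : ∀ i, w i * Real.log (s i) - w i * Real.log (w i) ≤ s i - w i := by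
    intro i
    rcases eq_or_lt_of_le (hw i) with h | h
    · simp [← h, hs i]
    · have hsi := hws i h
      have hdiv : 0 < s i / w i := div_pos hsi h
      calc w i * Real.log (s i) - w i * Real.log (w i)
          = w i * (Real.log (s i) - Real.log (w i)) := by ring
        _ ≤ w i * (s i / w i - 1) := by
            apply mul_le_mul_of_nonneg_left _ (hw i)
            rw [← Real.log_div (ne_of_gt hsi) (ne_of_gt h)]
            exact Real.log_le_sub_one_of_pos hdiv
        _ = s i - w i := by field_simp
  calc ∑ i, w i * Real.log (s i) - ∑ i, w i * Real.log (w i)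
      = ∑ i, (w i * Real.log (s i) - w i * Real.log (w i)) := by rw [Finset.sum_sub_distrib]
    _ ≤ ∑ i, (s i - w i) := Finset.sum_le_sum fun i _ => hterm i
    _ = (∑ i, s i) - 1 := by rw [Finset.sum_sub_distrib, h1]
    _ ≤ 0 := by linarith

/-- Max-entropy bound. -/
lemma entropy_le_log_card (p : Ω → ℝ) (hp : ∀ ω, 0 ≤ p ω) (hpsum : ∑ ω, p ω = 1)
    (f : Ω → A) : entropy p f ≤ Real.log (Fintype.card A) := by
  have hΩ : Nonempty Ω := by
    by_contra h
    rw [not_nonempty_iff] at h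
    rw [Finset.univ_eq_empty, Finset.sum_empty] at hpsum
    norm_num at hpsum
  have hA : Nonempty A := ⟨f (Classical.arbitrary Ω)⟩
  have hcard : 0 < (Fintype.card A : ℝ) := by exact_mod_cast Fintype.card_pos
  have h := key_ineq (dist p f) (fun _ => (Fintype.card A : ℝ)⁻¹)
    (dist_nonneg' p hp f) (fun _ => by positivity) (fun _ _ => by positivity)
    (by rw [sum_dist, hpsum])
    (by rw [Finset.sum_const, Finset.card_univ, nsmul_eq_mul,
          mul_inv_cancel₀ (ne_of_gt hcard)])
  have hlog : ∑ a, dist p f a * Real.log ((Fintype.card A : ℝ)⁻¹)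
      = -Real.log (Fintype.card A) := by
    rw [← Finset.sum_mul, sum_dist, hpsum, one_mul, Real.log_inv]
  rw [hlog] at h
  unfold entropy
  linarith

lemma joint_le_fst (p : Ω → ℝ) (hp : ∀ ω, 0 ≤ p ω) (f : Ω → A) (g : Ω → B) (a : A) (b : B) :
    dist p (fun ω => (f ω, g ω)) (a, b) ≤ dist p f a := by
  rw [← dist_fst p f g a]
  exact Finset.single_le_sum
    (fun b' _ => dist_nonneg' p hp (fun ω => (f ω, g ω)) (a, b')) (Finset.mem_univ b)

lemma joint_le_snd (p : Ω → ℝ) (hp : ∀ ω, 0 ≤ p ω) (f : Ω → A) (g : Ω → B) (a : A) (b : B) :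
    dist p (fun ω => (f ω, g ω)) (a, b) ≤ dist p g b := by
  rw [← dist_snd p f g b]
  exact Finset.single_le_sum
    (fun a' _ => dist_nonneg' p hp (fun ω => (f ω, g ω)) (a', b)) (Finset.mem_univ a)

/-- Subadditivity: `H(f,g) ≤ H(f) + H(g)`. -/
lemma entropy_pair_le (p : Ω → ℝ) (hp : ∀ ω, 0 ≤ p ω) (hpsum : ∑ ω, p ω = 1)
    (f : Ω → A) (g : Ω → B) :
    entropy p (fun ω => (f ω, g ω)) ≤ entropy p f + entropy p g := by
  set r := dist p (fun ω => (f ω, g ω)) with hr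
  have hrn : ∀ x, 0 ≤ r x := fun x => dist_nonneg' p hp _ _
  have hsumS : ∑ x : A × B, dist p f x.1 * dist p g x.2 = 1 := by
    rw [Fintype.sum_prod_type]
    have : ∀ a : A, ∑ b, dist p f a * dist p g b = dist p f a := by
      intro a; rw [← Finset.mul_sum, sum_dist, hpsum, mul_one]
    rw [Finset.sum_congr rfl fun a _ => this a, sum_dist, hpsum]
  have h := key_ineq r (fun x : A × B => dist p f x.1 * dist p g x.2)
    hrn (fun x => mul_nonneg (dist_nonneg' p hp _ _) (dist_nonneg' p hp _ _))
    (fun x hx => mul_pos (lt_of_lt_of_le hx (joint_le_fst p hp f g x.1 x.2))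
      (lt_of_lt_of_le hx (joint_le_snd p hp f g x.1 x.2)))
    (by rw [sum_dist, hpsum]) (le_of_eq hsumS)
  have hsplit : ∑ x : A × B, r x * Real.log (dist p f x.1 * dist p g x.2)
      = ∑ a, dist p f a * Real.log (dist p f a) + ∑ b, dist p g b * Real.log (dist p g b) := by
    have hterm : ∀ x : A × B, r x * Real.log (dist p f x.1 * dist p g x.2)
        = r x * Real.log (dist p f x.1) + r x * Real.log (dist p g x.2) := by
      intro x
      rcases eq_or_lt_of_le (hrn x) with h0 | h0
      · simp [← h0]
      · have h1 := lt_of_lt_of_le h0 (joint_le_fst p hp f g x.1 x.2)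
        have h2 := lt_of_lt_of_le h0 (joint_le_snd p hp f g x.1 x.2)
        rw [Real.log_mul (ne_of_gt h1) (ne_of_gt h2), mul_add]
    rw [Finset.sum_congr rfl fun x _ => hterm x, Finset.sum_add_distrib,
      sum_pair_fst p f g (fun a => Real.log (dist p f a)),
      sum_pair_snd p f g (fun b => Real.log (dist p g b))]
  rw [hsplit] at h
  unfold entropy
  linarith

/-- Monotonicity: `H(g) ≤ H(f,g)`. -/
lemma entropy_snd_le_pair (p : Ω → ℝ) (hp : ∀ ω, 0 ≤ p ω)
    (f : Ω → A) (g : Ω → B) :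
    entropy p g ≤ entropy p (fun ω => (f ω, g ω)) := by
  set r := dist p (fun ω => (f ω, g ω)) with hr
  have hrn : ∀ x, 0 ≤ r x := fun x => dist_nonneg' p hp _ _
  have key : ∑ x : A × B, r x * Real.log (r x)
      ≤ ∑ b, dist p g b * Real.log (dist p g b) := by
    rw [← sum_pair_snd p f g (fun b => Real.log (dist p g b))]
    refine Finset.sum_le_sum fun x _ => ?_
    rcases eq_or_lt_of_le (hrn x) with h0 | h0
    · have hx0 : _root_.dist p (fun ω => (f ω, g ω)) x = 0 := h0.symm
      rw [← h0, hx0]; simp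
    · exact mul_le_mul_of_nonneg_left
        (Real.log_le_log h0 (joint_le_snd p hp f g x.1 x.2)) (hrn x)
  unfold entropy
  linarith

lemma entropy_fst_le_pair (p : Ω → ℝ) (hp : ∀ ω, 0 ≤ p ω)
    (f : Ω → A) (g : Ω → B) :
    entropy p f ≤ entropy p (fun ω => (f ω, g ω)) := by
  set r := dist p (fun ω => (f ω, g ω)) with hr
  have hrn : ∀ x, 0 ≤ r x := fun x => dist_nonneg' p hp _ _
  have key : ∑ x : A × B, r x * Real.log (r x)
      ≤ ∑ a, dist p f a * Real.log (dist p f a) := by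
    rw [← sum_pair_fst p f g (fun a => Real.log (dist p f a))]
    refine Finset.sum_le_sum fun x _ => ?_
    rcases eq_or_lt_of_le (hrn x) with h0 | h0
    · have hx0 : _root_.dist p (fun ω => (f ω, g ω)) x = 0 := h0.symm
      rw [← h0, hx0]; simp
    · exact mul_le_mul_of_nonneg_left
        (Real.log_le_log h0 (joint_le_fst p hp f g x.1 x.2)) (hrn x)
  unfold entropy
  linarith

end Aux

/-- The normalized JEMMIG score
`(H(Z) + H(Y) − 2 I(Z;Y) + I(Z';Y)) / (log N + H(Y))` lies in `[0,1]`. -/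
theorem normalized_jemmig_mem_unitInterval
    {Ω A A' B : Type*} [Fintype Ω] [Fintype A] [Fintype A'] [Fintype B]
    [DecidableEq A] [DecidableEq A'] [DecidableEq B]
    (p : Ω → ℝ) (hp : ∀ ω, 0 ≤ p ω) (hpsum : ∑ ω, p ω = 1)
    (Y : Ω → B) (Z : Ω → A) (Z' : Ω → A')
    (N : ℕ) (hN : Fintype.card A = N) (hN2 : 2 ≤ N)
    (hle : mutualInfo p Z' Y ≤ mutualInfo p Z Y)
    (hY : 0 < entropy p Y) :
    0 ≤ (entropy p Z + entropy p Y - 2 * mutualInfo p Z Y + mutualInfo p Z' Y)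
          / (Real.log N + entropy p Y) ∧
      (entropy p Z + entropy p Y - 2 * mutualInfo p Z Y + mutualInfo p Z' Y)
          / (Real.log N + entropy p Y) ≤ 1 := by
  have hZ := entropy_le_log_card p hp hpsum Z
  rw [hN] at hZ
  have h1 := entropy_fst_le_pair p hp Z Y
  have h2 := entropy_snd_le_pair p hp Z Y
  have hI' : 0 ≤ mutualInfo p Z' Y := by
    have := entropy_pair_le p hp hpsum Z' Y
    unfold mutualInfo
    linarith
  have hsub := entropy_pair_le p hp hpsum Z Y
  have hlogN : 0 < Real.log N := by
    apply Real.log_pos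
    exact_mod_cast Nat.lt_of_lt_of_le one_lt_two hN2
  have hden : 0 < Real.log N + entropy p Y := by linarith
  constructor
  · apply div_nonneg _ hden.le
    unfold mutualInfo at hle hI' ⊢
    linarith
  · rw [div_le_one hden]
    unfold mutualInfo at hle hI' ⊢
    linarith
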